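/- (Yudovich's lemma.) Let D be a measurable subset of ℝⁿ and let f and g be nonnegative measurable functions in L¹(D) ∩ L^∞(D). Let M ≥ ‖f‖_{L^∞(D)}, and assume that for some p₀ > 1 and some positive continuous function φ : [p₀, ∞) → (0, ∞), ‖g‖_{L^p(D)} ≤ φ(p) for all p ≥ p₀. Then ∫_D f(x) g(x) dx ≤ β_{M,φ}(‖f‖_{L¹(D)}). -/

import Mathlib

open Set Filter Topology MeasureTheory

/-- Yudovich's lemma: for `D ⊆ ℝⁿ` measurable, `f, g ≥ 0` measurable in `L¹(D) ∩ L^∞(D)`,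
`M ≥ ‖f‖_{L^∞(D)}`, and `‖g‖_{L^p(D)} ≤ φ(p)` for all `p ≥ p₀` (`p₀ > 1`, `φ` positive
continuous), one has `∫_D f g ≤ β_{M,φ}(‖f‖_{L¹(D)})`, where
`β_{M,φ}(x) = inf {M^ε x^(1-ε) φ(1/ε) : ε ∈ (0, 1/p₀]}`. -/
lemma aux_memLp {α : Type*} [MeasurableSpace α] {μ : Measure α} {h : α → ℝ}
    (h1 : Integrable h μ) (hinf : MemLp h ⊤ μ) {r : ℝ} (hr : 1 ≤ r) :
    MemLp h (ENNReal.ofReal r) μ := by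
  set C := (eLpNorm h ⊤ μ).toReal with hC
  have hbd : ∀ᵐ x ∂μ, ‖h x‖ ≤ C := by
    filter_upwards [ae_le_eLpNormEssSup (f := h) (μ := μ)] with x hx
    have hfin : eLpNorm h ⊤ μ ≠ ⊤ := hinf.2.ne
    rw [eLpNorm_exponent_top] at hfin
    have := (ENNReal.toReal_le_toReal ENNReal.coe_ne_top hfin).mpr hx
    simpa [hC, eLpNorm_exponent_top] using this
  have hC0 : 0 ≤ C := ENNReal.toReal_nonneg
  have hr0 : (0:ℝ) < r := by linarith
  have hint : Integrable (fun x => ‖h x‖ ^ r) μ := by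
    refine Integrable.mono' ((h1.norm).const_mul (C ^ (r - 1))) ?_ ?_
    · exact (Real.continuous_rpow_const hr0.le).comp_aestronglyMeasurable hinf.1.norm
    · filter_upwards [hbd] with x hx
      rw [Real.norm_of_nonneg (Real.rpow_nonneg (norm_nonneg _) _)]
      rcases eq_or_lt_of_le (norm_nonneg (h x)) with h0 | h0
      · rw [← h0, Real.zero_rpow hr0.ne']
        positivity
      · calc ‖h x‖ ^ r = ‖h x‖ ^ (r - 1) * ‖h x‖ := by
              rw [← Real.rpow_add_one h0.ne']; ring_nf
          _ ≤ C ^ (r - 1) * ‖h x‖ :=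
              mul_le_mul_of_nonneg_right
                (Real.rpow_le_rpow (norm_nonneg _) hx (by linarith)) (norm_nonneg _)
  have hne : ENNReal.ofReal r ≠ 0 := by simp [hr0]
  have htop : ENNReal.ofReal r ≠ ⊤ := ENNReal.ofReal_ne_top
  have := (memLp_norm_rpow_iff (p := ENNReal.ofReal r) hinf.1 hne htop)
  rw [ENNReal.div_self hne htop, ENNReal.toReal_ofReal hr0.le] at this
  exact this.mp (memLp_one_iff_integrable.mpr hint)

theorem stmt_10 (n : ℕ) (D : Set (Fin n → ℝ)) (hD : MeasurableSet D)
    (f g : (Fin n → ℝ) → ℝ) (hf : Measurable f) (hg : Measurable g)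
    (hfnn : ∀ x ∈ D, 0 ≤ f x) (hgnn : ∀ x ∈ D, 0 ≤ g x)
    (hf1 : IntegrableOn f D) (hfinf : MemLp f ⊤ (volume.restrict D))
    (hg1 : IntegrableOn g D) (hginf : MemLp g ⊤ (volume.restrict D))
    (M : ℝ) (hM : (eLpNorm f ⊤ (volume.restrict D)).toReal ≤ M)
    (p₀ : ℝ) (hp₀ : 1 < p₀) (φ : ℝ → ℝ)
    (hφc : ContinuousOn φ (Ici p₀)) (hφpos : ∀ p ≥ p₀, 0 < φ p)
    (hgp : ∀ p ≥ p₀, (eLpNorm g (ENNReal.ofReal p) (volume.restrict D)).toReal ≤ φ p) :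
    ∫ x in D, f x * g x ≤
      sInf ((fun ε => M ^ ε * (∫ x in D, f x) ^ (1 - ε) * φ (1 / ε)) '' Ioc 0 (1 / p₀)) := by
  have hp₀pos : (0:ℝ) < p₀ := by linarith
  have hε₀ : (0:ℝ) < 1 / p₀ := by positivity
  set μr := volume.restrict D with hμr
  have hfae : ∀ᵐ x ∂μr, 0 ≤ f x := ae_restrict_of_forall_mem hD hfnn
  have hgae : ∀ᵐ x ∂μr, 0 ≤ g x := ae_restrict_of_forall_mem hD hgnn
  have hMf : ∀ᵐ x ∂μr, f x ≤ M := by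
    have hfin : eLpNorm f ⊤ μr ≠ ⊤ := hfinf.2.ne
    rw [eLpNorm_exponent_top] at hfin
    filter_upwards [ae_le_eLpNormEssSup (f := f) (μ := μr)] with x hx
    have h2 := (ENNReal.toReal_le_toReal ENNReal.coe_ne_top hfin).mpr hx
    have h3 : ‖f x‖ ≤ (eLpNorm f ⊤ μr).toReal := by
      simpa [eLpNorm_exponent_top] using h2
    exact le_trans (le_trans (le_abs_self _) h3) hM
  have hM0 : (0:ℝ) ≤ M := le_trans ENNReal.toReal_nonneg hM
  have hI0 : (0:ℝ) ≤ ∫ x in D, f x := integral_nonneg_of_ae hfae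
  set I := ∫ x in D, f x with hI
  refine le_csInf ((nonempty_Ioc.mpr hε₀).image _) ?_
  rintro b ⟨ε, ⟨hε0, hε1⟩, rfl⟩
  have hεlt1 : ε < 1 := lt_of_le_of_lt hε1 ((div_lt_one hp₀pos).mpr hp₀)
  have h1ε : (0:ℝ) < 1 - ε := by linarith
  set q : ℝ := 1 / (1 - ε) with hqdef
  set p : ℝ := 1 / ε with hpdef
  have hq1 : 1 < q := by
    rw [hqdef, lt_div_iff₀ h1ε]; linarith
  have hp_ge : p₀ ≤ p := by
    rw [hpdef, le_div_iff₀ hε0]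
    calc p₀ * ε ≤ p₀ * (1 / p₀) := by
          exact mul_le_mul_of_nonneg_left hε1 hp₀pos.le
      _ = 1 := by field_simp
  have hp1 : 1 < p := lt_of_lt_of_le hp₀ hp_ge
  have hpq : q.HolderConjugate p := by
    refine Real.holderConjugate_iff.mpr ⟨?_, ?_⟩
    · exact hq1
    · rw [hqdef, hpdef]
      field_simp
      ring
  have hfq : MemLp f (ENNReal.ofReal q) μr := aux_memLp hf1 hfinf hq1.le
  have hgq : MemLp g (ENNReal.ofReal p) μr := aux_memLp hg1 hginf hp1.le
  have holder := MeasureTheory.integral_mul_le_Lp_mul_Lq_of_nonneg (μ := μr) hpq hfae hgae hfq hgq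
  -- bound on f factor
  have hqinv : 1 / q = 1 - ε := by rw [hqdef, one_div_one_div]
  have hbound : ∀ᵐ x ∂μr, f x ^ q ≤ M ^ (q - 1) * f x := by
    filter_upwards [hfae, hMf] with x hx0 hxM
    rcases eq_or_lt_of_le hx0 with h0 | h0
    · rw [← h0, Real.zero_rpow (by positivity : q ≠ 0)]
      simp
    · calc f x ^ q = f x ^ (q - 1) * f x := by
            rw [← Real.rpow_add_one h0.ne']; ring_nf
        _ ≤ M ^ (q - 1) * f x :=
            mul_le_mul_of_nonneg_right
              (Real.rpow_le_rpow hx0 hxM (by linarith)) hx0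
  have hintf : ∫ x in D, f x ^ q ≤ M ^ (q - 1) * I := by
    have h2 : ∫ x in D, M ^ (q - 1) * f x = M ^ (q - 1) * I := by
      rw [hI, integral_const_mul]
    rw [← h2]
    refine integral_mono_of_nonneg ?_ (hf1.const_mul _) hbound
    filter_upwards [hfae] with x hx using Real.rpow_nonneg hx q
  have hFq0 : (0:ℝ) ≤ ∫ x in D, f x ^ q := by
    refine integral_nonneg_of_ae ?_
    filter_upwards [hfae] with x hx using Real.rpow_nonneg hx q
  have hFf : (∫ x in D, f x ^ q) ^ (1 / q) ≤ M ^ ε * I ^ (1 - ε) := by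
    calc (∫ x in D, f x ^ q) ^ (1 / q) ≤ (M ^ (q - 1) * I) ^ (1 / q) :=
          Real.rpow_le_rpow hFq0 hintf (by positivity)
      _ = (M ^ (q - 1)) ^ (1 / q) * I ^ (1 / q) :=
          Real.mul_rpow (Real.rpow_nonneg hM0 _) hI0
      _ = M ^ ((q - 1) * (1 / q)) * I ^ (1 - ε) := by
          rw [← Real.rpow_mul hM0, hqinv]
      _ = M ^ ε * I ^ (1 - ε) := by
          congr 1
          have : (q - 1) * (1 / q) = 1 - 1 / q := by
            field_simp
          rw [this, hqinv]; ring_nf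
  -- bound on g factor
  have hGg : (∫ x in D, g x ^ p) ^ (1 / p) ≤ φ p := by
    have hnorm : ∫ x in D, g x ^ p = ∫ x in D, ‖g x‖ ^ p := by
      refine integral_congr_ae ?_
      filter_upwards [hgae] with x hx
      rw [Real.norm_of_nonneg hx]
    have heq := hgq.eLpNorm_eq_integral_rpow_norm
      (by simp [hp1.le]; positivity) ENNReal.ofReal_ne_top
    rw [ENNReal.toReal_ofReal (by positivity : (0:ℝ) ≤ p)] at heq
    have hG0 : (0:ℝ) ≤ (∫ x in D, ‖g x‖ ^ p) ^ p⁻¹ := by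
      apply Real.rpow_nonneg
      refine integral_nonneg_of_ae (Filter.Eventually.of_forall fun x => ?_)
      positivity
    have := hgp p hp_ge
    rw [heq, ENNReal.toReal_ofReal hG0] at this
    rw [hnorm, one_div]
    exact this
  have hG0' : (0:ℝ) ≤ (∫ x in D, g x ^ p) ^ (1 / p) := by
    apply Real.rpow_nonneg
    refine integral_nonneg_of_ae ?_
    filter_upwards [hgae] with x hx using Real.rpow_nonneg hx p
  have hφp : 1 / ε = p := rfl
  calc ∫ x in D, f x * g x
      ≤ (∫ x in D, f x ^ q) ^ (1 / q) * (∫ x in D, g x ^ p) ^ (1 / p) := holder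
    _ ≤ (M ^ ε * I ^ (1 - ε)) * φ p :=
        mul_le_mul hFf hGg hG0' (by positivity)
    _ = M ^ ε * I ^ (1 - ε) * φ (1 / ε) := by rw [hφp]
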